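/- For every x ∈ X, the commutator of O^x_{YD_x} (acting on the query register Y and the x-coordinate of the database register D) with 1_Y ⊗ Π^∅_D satisfies ‖[O^x_{YD_x}, 1_Y ⊗ Π^∅_D]‖ ≤ 2·2^{−n/2}·√(2·Γ_x), as operators on ℂ^{Y×D̄}. -/

import Mathlib

open scoped Matrix Kronecker

noncomputable section

/-- The ℓ²→ℓ² operator norm of a square complex matrix. -/
def opNorm {I : Type*} [Fintype I] [DecidableEq I] (A : Matrix I I ℂ) : ℝ :=
  ‖Matrix.toEuclideanCLM (𝕜 := ℂ) A‖

/-- The commutator [A,B] = AB - BA. -/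
def commM {I : Type*} [Fintype I] (A B : Matrix I I ℂ) : Matrix I I ℂ := A * B - B * A

/-- Euclidean norm of a vector in ℂ^I. -/
def vnorm {I : Type*} [Fintype I] (v : I → ℂ) : ℝ := Real.sqrt (∑ i, ‖v i‖ ^ 2)

/-- Y = {0,1}^n. -/
abbrev Yb (n : ℕ) := Fin n → Bool
/-- Ȳ = Y ∪ {⊥}. -/
abbrev Ybar (n : ℕ) := Option (Yb n)

/-- standard basis vector |a⟩. -/
def ket {n : ℕ} (a : Ybar n) : Ybar n → ℂ := fun b => if b = a then 1 else 0

/-- (-1)^{η⋅y}. -/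
def signDot {n : ℕ} (η y : Yb n) : ℂ := (-1 : ℂ) ^ (Finset.univ.filter fun i => η i && y i).card

/-- 2^{-n/2}. -/
def cst (n : ℕ) : ℝ := (2 : ℝ) ^ (-(n : ℝ) / 2)

/-- |φ_η⟩ = 2^{-n/2} ∑_y (-1)^{η⋅y} |y⟩. -/
def phi {n : ℕ} (η : Yb n) : Ybar n → ℂ :=
  fun a => Option.casesOn a 0 fun y => (cst n : ℂ) * signDot η y

/-- |φ_0⟩. -/
def phi0 (n : ℕ) : Ybar n → ℂ := phi fun _ => false

/-- The Walsh–Hadamard transform on ℂ^Y, extended by the identity on |⊥⟩. -/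
def Hbar (n : ℕ) : Matrix (Ybar n) (Ybar n) ℂ :=
  Matrix.of fun a b =>
    match a, b with
    | none, none => 1
    | some y, some y' => (cst n : ℂ) * signDot y y'
    | _, _ => 0

/-- The involution exchanging ⊥ and 0^n. -/
def swapBot (n : ℕ) : Ybar n → Ybar n :=
  fun a =>
    Option.casesOn a (some fun _ => false) fun y =>
      if y = (fun _ => false) then none else some y

/-- The permutation matrix exchanging |⊥⟩ and |0^n⟩. -/
def Sswap (n : ℕ) : Matrix (Ybar n) (Ybar n) ℂ :=
  Matrix.of fun a b => if a = swapBot n b then 1 else 0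

/-- F = H̄ ⬝ S ⬝ H̄. -/
def Fmat (n : ℕ) : Matrix (Ybar n) (Ybar n) ℂ := Hbar n * Sswap n * Hbar n

/-- Γ_x = |{y : (x,y) ∈ R}|. -/
def Gam {n : ℕ} {X : Type*} [Fintype X] (R : X → Yb n → Prop) [∀ x, DecidablePred (R x)]
    (x : X) : ℕ :=
  (Finset.univ.filter fun y => R x y).card

/-- Γ_R = max_x Γ_x. -/
def GamR {n : ℕ} {X : Type*} [Fintype X] (R : X → Yb n → Prop) [∀ x, DecidablePred (R x)] : ℕ :=
  Finset.univ.sup fun x => Gam R x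

/-- whether an entry a ∈ Ȳ satisfies the relation at x (⊥ never does). -/
def hitB {n : ℕ} {X : Type*} (R : X → Yb n → Prop) [∀ x, DecidablePred (R x)] (x : X) :
    Ybar n → Bool :=
  fun a => Option.casesOn a false fun y => decide (R x y)

/-- The projection Π^x = ∑_{y : (x,y)∈R} |y⟩⟨y| on ℂ^Ȳ. -/
def Pix {n : ℕ} {X : Type*} (R : X → Yb n → Prop) [∀ x, DecidablePred (R x)] (x : X) :
    Matrix (Ybar n) (Ybar n) ℂ :=
  Matrix.diagonal fun a => if hitB R x a then 1 else 0

/-- bitwise xor. -/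
def xorY {n : ℕ} (y y' : Yb n) : Yb n := fun i => xor (y i) (y' i)

/-- CNOT on Y × Ȳ (control Ȳ, target Y), acting trivially on |y⟩⊗|⊥⟩. -/
def cnotFun (n : ℕ) : Yb n × Ybar n → Yb n × Ybar n :=
  fun p => Option.casesOn p.2 p fun y' => (xorY p.1 y', p.2)

def CNOTmat (n : ℕ) : Matrix (Yb n × Ybar n) (Yb n × Ybar n) ℂ :=
  Matrix.of fun a b => if a = cnotFun n b then 1 else 0

/-- O^x = (1⊗F)·CNOT·(1⊗F) on ℂ^{Y×Ȳ}. -/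
def Oxsmall (n : ℕ) : Matrix (Yb n × Ybar n) (Yb n × Ybar n) ℂ :=
  ((1 : Matrix (Yb n) (Yb n) ℂ) ⊗ₖ Fmat n) * CNOTmat n *
    ((1 : Matrix (Yb n) (Yb n) ℂ) ⊗ₖ Fmat n)

/-- The database index set D̄ = X → Ȳ. -/
abbrev Db (n : ℕ) (X : Type*) := X → Ybar n

/-- An operator A on ℂ^Ȳ acting on the x-coordinate of ℂ^{D̄}. -/
def onCoord {n : ℕ} {X : Type*} [Fintype X] [DecidableEq X] (x : X)
    (A : Matrix (Ybar n) (Ybar n) ℂ) : Matrix (Db n X) (Db n X) ℂ :=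
  Matrix.of fun d d' => if ∀ x', x' ≠ x → d x' = d' x' then A (d x) (d' x) else 0

/-- Π^x_{D_x} : diagonal projection on ℂ^{D̄} onto databases with (x, d x) ∈ R. -/
def PiDx {n : ℕ} {X : Type*} [Fintype X] [DecidableEq X]
    (R : X → Yb n → Prop) [∀ x, DecidablePred (R x)] (x : X) :
    Matrix (Db n X) (Db n X) ℂ :=
  Matrix.diagonal fun d => if hitB R x (d x) then 1 else 0

/-- Π^∅_D : diagonal projection on ℂ^{D̄} onto databases hitting R nowhere. -/
def PiEmptyD {n : ℕ} {X : Type*} [Fintype X] [DecidableEq X]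
    (R : X → Yb n → Prop) [∀ x, DecidablePred (R x)] :
    Matrix (Db n X) (Db n X) ℂ :=
  Matrix.diagonal fun d => if ∀ x, hitB R x (d x) = false then 1 else 0

/-- CNOT_{YD_x}. -/
def cnotDFun {n : ℕ} {X : Type*} (x : X) : Yb n × Db n X → Yb n × Db n X :=
  fun p => Option.casesOn (p.2 x) p fun yx => (xorY p.1 yx, p.2)

def CNOTD {n : ℕ} {X : Type*} [Fintype X] [DecidableEq X] (x : X) :
    Matrix (Yb n × Db n X) (Yb n × Db n X) ℂ :=
  Matrix.of fun a b => if a = cnotDFun x b then 1 else 0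

/-- F_{D_x}. -/
def FDx (n : ℕ) {X : Type*} [Fintype X] [DecidableEq X] (x : X) :
    Matrix (Db n X) (Db n X) ℂ :=
  onCoord x (Fmat n)

/-- O^x_{YD_x} = F_{D_x}·CNOT_{YD_x}·F_{D_x} on ℂ^{Y×D̄}. -/
def OxD (n : ℕ) {X : Type*} [Fintype X] [DecidableEq X] (x : X) :
    Matrix (Yb n × Db n X) (Yb n × Db n X) ℂ :=
  ((1 : Matrix (Yb n) (Yb n) ℂ) ⊗ₖ FDx n x) * CNOTD x *
    ((1 : Matrix (Yb n) (Yb n) ℂ) ⊗ₖ FDx n x)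

/-- O_{XYD} = ∑_x |x⟩⟨x| ⊗ O^x_{YD_x} on ℂ^{X×Y×D̄}. -/
def OXYD (n : ℕ) (X : Type*) [Fintype X] [DecidableEq X] :
    Matrix (X × Yb n × Db n X) (X × Yb n × Db n X) ℂ :=
  Matrix.of fun p q =>
    if p.1 = q.1 then OxD n p.1 (p.2.1, p.2.2) (q.2.1, q.2.2) else 0

/-- The pointer set P = ZMod (|X|+1). -/
abbrev Ptr (X : Type*) [Fintype X] := ZMod (Fintype.card X + 1)

/-- Encoding of X into the nonzero elements of ZMod (|X|+1). -/
def encodeX {X : Type*} [Fintype X] (x : X) : Ptr X :=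
  (((Fintype.equivFin X x : ℕ) + 1 : ℕ) : Ptr X)

/-- ext(d): the smallest x ∈ X with (x, d x) ∈ R, encoded in ZMod (|X|+1); ∅ ↦ 0. -/
def extD {n : ℕ} {X : Type*} [Fintype X] [LinearOrder X] (R : X → Yb n → Prop)
    [∀ x, DecidablePred (R x)] (d : Db n X) : Ptr X :=
  if h : (Finset.univ.filter fun x => hitB R x (d x) = true).Nonempty then
    encodeX ((Finset.univ.filter fun x => hitB R x (d x) = true).min' h)
  else 0

/-- The purified measurement M_{DP} : |d⟩⊗|w⟩ ↦ |d⟩⊗|w + ext(d)⟩ on ℂ^{D̄×P}. -/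
def MDP {n : ℕ} {X : Type*} [Fintype X] [LinearOrder X] (R : X → Yb n → Prop)
    [∀ x, DecidablePred (R x)] :
    Matrix (Db n X × Ptr X) (Db n X × Ptr X) ℂ :=
  Matrix.of fun p q => if p = (q.1, q.2 + extD R q.1) then 1 else 0

/-- O^x_{YD_x} ⊗ 1_P on ℂ^{Y×D̄×P}. -/
def OxDP (n : ℕ) {X : Type*} [Fintype X] [DecidableEq X] (x : X) :
    Matrix (Yb n × Db n X × Ptr X) (Yb n × Db n X × Ptr X) ℂ :=
  Matrix.of fun p q =>
    if p.2.2 = q.2.2 then OxD n x (p.1, p.2.1) (q.1, q.2.1) else 0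

/-- 1_Y ⊗ M_{DP} on ℂ^{Y×D̄×P}. -/
def MYDP {n : ℕ} {X : Type*} [Fintype X] [LinearOrder X] (R : X → Yb n → Prop)
    [∀ x, DecidablePred (R x)] :
    Matrix (Yb n × Db n X × Ptr X) (Yb n × Db n X × Ptr X) ℂ :=
  Matrix.of fun p q =>
    if p.1 = q.1 then MDP R (p.2.1, p.2.2) (q.2.1, q.2.2) else 0

/-- O_{XYD} ⊗ 1_P on ℂ^{X×Y×D̄×P}. -/
def OXYDP (n : ℕ) (X : Type*) [Fintype X] [DecidableEq X] :
    Matrix (X × Yb n × Db n X × Ptr X) (X × Yb n × Db n X × Ptr X) ℂ :=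
  Matrix.of fun p q =>
    if p.2.2.2 = q.2.2.2 then
      OXYD n X (p.1, p.2.1, p.2.2.1) (q.1, q.2.1, q.2.2.1)
    else 0

/-- 1_{X×Y} ⊗ M_{DP} on ℂ^{X×Y×D̄×P}. -/
def MXYDP {n : ℕ} {X : Type*} [Fintype X] [LinearOrder X] (R : X → Yb n → Prop)
    [∀ x, DecidablePred (R x)] :
    Matrix (X × Yb n × Db n X × Ptr X) (X × Yb n × Db n X × Ptr X) ℂ :=
  Matrix.of fun p q =>
    if p.1 = q.1 ∧ p.2.1 = q.2.1 then
      MDP R (p.2.2.1, p.2.2.2) (q.2.2.1, q.2.2.2)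
    else 0








-- helper instance (Lean struggles to find this by search)
instance instDEq4 (n : ℕ) (X : Type*) [Fintype X] [DecidableEq X] :
    DecidableEq (X × Yb n × Db n X × Ptr X) :=
  instDecidableEqProd


-- extensions to the five-register space W × X × Y × D̄ × P
/-- 1_W ⊗ O_{XYD} ⊗ 1_P on ℂ^{W×X×Y×D̄×P}. -/
def OW (n : ℕ) (W X : Type*) [Fintype X] [DecidableEq X] [DecidableEq W] :
    Matrix (W × X × Yb n × Db n X × Ptr X) (W × X × Yb n × Db n X × Ptr X) ℂ :=
  Matrix.of fun p q =>
    if p.1 = q.1 ∧ p.2.2.2.2 = q.2.2.2.2 then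
      OXYD n X (p.2.1, p.2.2.1, p.2.2.2.1) (q.2.1, q.2.2.1, q.2.2.2.1)
    else 0

/-- 1_{W×X×Y} ⊗ M_{DP} on ℂ^{W×X×Y×D̄×P}. -/
def MW {n : ℕ} (W : Type*) {X : Type*} [Fintype X] [LinearOrder X] [DecidableEq W]
    (R : X → Yb n → Prop) [∀ x, DecidablePred (R x)] :
    Matrix (W × X × Yb n × Db n X × Ptr X) (W × X × Yb n × Db n X × Ptr X) ℂ :=
  Matrix.of fun p q =>
    if p.1 = q.1 ∧ p.2.1 = q.2.1 ∧ p.2.2.1 = q.2.2.1 then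
      MDP R (p.2.2.2.1, p.2.2.2.2) (q.2.2.2.1, q.2.2.2.2)
    else 0

instance instDEq5 (n : ℕ) (W X : Type*) [Fintype X] [DecidableEq X] [DecidableEq W] :
    DecidableEq (W × X × Yb n × Db n X × Ptr X) :=
  instDecidableEqProd


/-- V ⊗ 1_{D̄×P} on ℂ^{W×X×Y×D̄×P}. -/
def Vext (n : ℕ) (W X : Type*) [Fintype X] [DecidableEq X]
    (V : Matrix (W × X × Yb n) (W × X × Yb n) ℂ) :
    Matrix (W × X × Yb n × Db n X × Ptr X) (W × X × Yb n × Db n X × Ptr X) ℂ :=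
  Matrix.of fun p q =>
    if p.2.2.2 = q.2.2.2 then V (p.1, p.2.1, p.2.2.1) (q.1, q.2.1, q.2.2.1) else 0

/-- Ψ = ψ ⊗ |⊥⃗⟩ ⊗ |0⟩. -/
def PsiInit (n : ℕ) {W X : Type*} [Fintype X] [DecidableEq X]
    (ψ : W × X × Yb n → ℂ) : W × X × Yb n × Db n X × Ptr X → ℂ :=
  fun p =>
    if p.2.2.2.1 = (fun _ => (none : Ybar n)) ∧ p.2.2.2.2 = (0 : Ptr X) then
      ψ (p.1, p.2.1, p.2.2.1)
    else 0

/-- 1_{W×X×Y×D̄} ⊗ |0⟩⟨0|_P. -/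
def ProjZeroP (n : ℕ) (W X : Type*) [Fintype X] [DecidableEq X] [DecidableEq W] :
    Matrix (W × X × Yb n × Db n X × Ptr X) (W × X × Yb n × Db n X × Ptr X) ℂ :=
  Matrix.of fun p q =>
    if p.1 = q.1 ∧ p.2.1 = q.2.1 ∧ p.2.2.1 = q.2.2.1 ∧ p.2.2.2.1 = q.2.2.2.1 ∧
        p.2.2.2.2 = (0 : Ptr X) ∧ q.2.2.2.2 = (0 : Ptr X) then 1 else 0



/-- O_{XYD} acting on registers 1, 2 and 5 of ℂ^{X×Y×X'×Y'×D̄}. -/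
def Oquery1 (n : ℕ) (X : Type*) [Fintype X] [DecidableEq X] :
    Matrix (X × Yb n × X × Yb n × Db n X) (X × Yb n × X × Yb n × Db n X) ℂ :=
  Matrix.of fun p q =>
    if p.2.2.1 = q.2.2.1 ∧ p.2.2.2.1 = q.2.2.2.1 then
      OXYD n X (p.1, p.2.1, p.2.2.2.2) (q.1, q.2.1, q.2.2.2.2)
    else 0

/-- O_{X'Y'D} acting on registers 3, 4 and 5 of ℂ^{X×Y×X'×Y'×D̄}. -/
def Oquery2 (n : ℕ) (X : Type*) [Fintype X] [DecidableEq X] :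
    Matrix (X × Yb n × X × Yb n × Db n X) (X × Yb n × X × Yb n × Db n X) ℂ :=
  Matrix.of fun p q =>
    if p.1 = q.1 ∧ p.2.1 = q.2.1 then
      OXYD n X (p.2.2.1, p.2.2.2.1, p.2.2.2.2) (q.2.2.1, q.2.2.2.1, q.2.2.2.2)
    else 0


/-- M^R_{DP} acting on registers D and P of ℂ^{D̄×P×P'}. -/
def Mext1 {n : ℕ} {X : Type*} [Fintype X] [LinearOrder X]
    (R : X → Yb n → Prop) [∀ x, DecidablePred (R x)] :
    Matrix (Db n X × Ptr X × Ptr X) (Db n X × Ptr X × Ptr X) ℂ :=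
  Matrix.of fun p q =>
    if p.2.2 = q.2.2 then MDP R (p.1, p.2.1) (q.1, q.2.1) else 0

/-- M^{R'}_{DP'} acting on registers D and P' of ℂ^{D̄×P×P'}. -/
def Mext2 {n : ℕ} {X : Type*} [Fintype X] [LinearOrder X]
    (R' : X → Yb n → Prop) [∀ x, DecidablePred (R' x)] :
    Matrix (Db n X × Ptr X × Ptr X) (Db n X × Ptr X × Ptr X) ℂ :=
  Matrix.of fun p q =>
    if p.2.1 = q.2.1 then MDP R' (p.1, p.2.2) (q.1, q.2.2) else 0




-- ======== auxiliary lemmas for stmt9 ========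
section Stmt9Aux
open scoped ComplexConjugate
local notation "⟪" x ", " y "⟫" => @inner ℂ _ _ x y

def rank1 {I : Type*} [Fintype I] (v w : I → ℂ) : Matrix I I ℂ :=
  Matrix.of fun a b => v a * (starRingEnd ℂ) (w b)

section NormAux
variable {I : Type*} [Fintype I] [DecidableEq I]

lemma opNorm_nonneg (A : Matrix I I ℂ) : 0 ≤ opNorm A := norm_nonneg _

lemma opNorm_le_of_sq (A : Matrix I I ℂ) (c : ℝ) (hc : 0 ≤ c)
    (h : ∀ x : I → ℂ, ∑ i, ‖A.mulVec x i‖^2 ≤ c^2 * ∑ i, ‖x i‖^2) : opNorm A ≤ c := by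
  refine ContinuousLinearMap.opNorm_le_bound _ hc (fun x => ?_)
  rw [EuclideanSpace.norm_eq, EuclideanSpace.norm_eq]
  have h1 : ∀ i, ‖(Matrix.toEuclideanCLM (𝕜 := ℂ) A x) i‖ = ‖A.mulVec (fun j => x j) i‖ :=
    fun i => rfl
  calc Real.sqrt (∑ i, ‖(Matrix.toEuclideanCLM (𝕜 := ℂ) A x) i‖^2)
      = Real.sqrt (∑ i, ‖A.mulVec (fun j => x j) i‖^2) := by simp_rw [h1]
    _ ≤ Real.sqrt (c^2 * ∑ i, ‖x i‖^2) := Real.sqrt_le_sqrt (h _)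
    _ = c * Real.sqrt (∑ i, ‖x i‖^2) := by
        rw [Real.sqrt_mul (by positivity), Real.sqrt_sq hc]

lemma sq_of_opNorm_le (A : Matrix I I ℂ) (c : ℝ) (h : opNorm A ≤ c) (x : I → ℂ) :
    ∑ i, ‖A.mulVec x i‖^2 ≤ c^2 * ∑ i, ‖x i‖^2 := by
  have hc : 0 ≤ c := le_trans (opNorm_nonneg A) h
  set x' : EuclideanSpace ℂ I := (WithLp.equiv 2 (I → ℂ)).symm x with hx'
  have hb : ‖Matrix.toEuclideanCLM (𝕜 := ℂ) A x'‖ ≤ c * ‖x'‖ :=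
    le_trans (ContinuousLinearMap.le_opNorm _ _) (by
      exact mul_le_mul_of_nonneg_right h (norm_nonneg _))
  rw [EuclideanSpace.norm_eq, EuclideanSpace.norm_eq] at hb
  have h1 : ∀ i, ‖(Matrix.toEuclideanCLM (𝕜 := ℂ) A x') i‖ = ‖A.mulVec x i‖ := fun i => rfl
  simp_rw [h1] at hb
  have h2 : ∀ i, ‖x' i‖ = ‖x i‖ := fun i => rfl
  simp_rw [h2] at hb
  set S1 : ℝ := ∑ i, ‖A.mulVec x i‖^2 with hS1
  set S2 : ℝ := ∑ i, ‖x i‖^2 with hS2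
  have hS1n : 0 ≤ S1 := Finset.sum_nonneg fun i _ => sq_nonneg _
  have hS2n : 0 ≤ S2 := Finset.sum_nonneg fun i _ => sq_nonneg _
  have h4 : (Real.sqrt S1)^2 ≤ (c * Real.sqrt S2)^2 :=
    pow_le_pow_left₀ (Real.sqrt_nonneg _) hb 2
  rw [Real.sq_sqrt hS1n, mul_pow, Real.sq_sqrt hS2n] at h4
  exact h4

lemma opNorm_mul_le (A B : Matrix I I ℂ) : opNorm (A*B) ≤ opNorm A * opNorm B := by
  unfold opNorm; rw [map_mul]; exact norm_mul_le _ _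
lemma opNorm_neg (A : Matrix I I ℂ) : opNorm (-A) = opNorm A := by
  unfold opNorm; rw [map_neg, norm_neg]
lemma opNorm_sub_le (A B : Matrix I I ℂ) : opNorm (A - B) ≤ opNorm A + opNorm B := by
  unfold opNorm; rw [map_sub]; exact norm_sub_le _ _

lemma opNorm_le_one_of_unitary (A : Matrix I I ℂ) (h : Aᴴ * A = 1) : opNorm A ≤ 1 := by
  have h1 : star (Matrix.toEuclideanCLM (𝕜 := ℂ) A) * (Matrix.toEuclideanCLM (𝕜 := ℂ) A) = 1 := by
    rw [← map_star, ← map_mul]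
    have : star A = Aᴴ := rfl
    rw [this, h, map_one]
  have h2 : opNorm A * opNorm A ≤ 1 := by
    unfold opNorm
    rw [← CStarRing.norm_star_mul_self, h1, ContinuousLinearMap.one_def]
    exact ContinuousLinearMap.norm_id_le
  nlinarith [opNorm_nonneg A]

lemma opNorm_diagonal_le_one (g : I → ℂ) (h : ∀ i, ‖g i‖ ≤ 1) :
    opNorm (Matrix.diagonal g) ≤ 1 := by
  apply opNorm_le_of_sq _ _ zero_le_one
  intro x
  rw [one_pow, one_mul]
  apply Finset.sum_le_sum
  intro i _
  rw [Matrix.mulVec_diagonal, norm_mul, mul_pow]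
  have h2 : ‖g i‖^2 ≤ 1 := by nlinarith [h i, norm_nonneg (g i)]
  nlinarith [sq_nonneg (‖x i‖)]

lemma opNorm_submatrix_le {J : Type*} [Fintype J] [DecidableEq J]
    (M : Matrix J J ℂ) (e : I ≃ J) : opNorm (M.submatrix e e) ≤ opNorm M := by
  apply opNorm_le_of_sq _ _ (opNorm_nonneg M)
  intro x
  have hmv : ∀ i, (M.submatrix e e).mulVec x i = M.mulVec (fun j => x (e.symm j)) (e i) := by
    intro i
    rw [Matrix.mulVec, Matrix.mulVec, dotProduct, dotProduct]
    rw [← Equiv.sum_comp e (fun j => M (e i) j * x (e.symm j))]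
    exact Finset.sum_congr rfl fun j _ => by rw [Matrix.submatrix_apply, Equiv.symm_apply_apply]
  simp_rw [hmv]
  rw [Equiv.sum_comp e (fun j => ‖M.mulVec (fun j' => x (e.symm j')) j‖^2),
    ← Equiv.sum_comp e.symm (fun i => ‖x i‖^2)]
  exact sq_of_opNorm_le M (opNorm M) le_rfl (fun j => x (e.symm j))

lemma opNorm_one_kron_le {L : Type*} [Fintype L] [DecidableEq L]
    (A : Matrix I I ℂ) : opNorm ((1 : Matrix L L ℂ) ⊗ₖ A) ≤ opNorm A := by
  apply opNorm_le_of_sq _ _ (opNorm_nonneg A)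
  intro x
  have hmv : ∀ l a, ((1 : Matrix L L ℂ) ⊗ₖ A).mulVec x (l, a)
      = A.mulVec (fun b => x (l, b)) a := by
    intro l a
    rw [Matrix.mulVec, dotProduct, Fintype.sum_prod_type]
    rw [Finset.sum_eq_single l]
    · rw [Matrix.mulVec, dotProduct]
      exact Finset.sum_congr rfl fun b _ => by
        simp [Matrix.kroneckerMap_apply, Matrix.one_apply]
    · intro l' _ hl'
      apply Finset.sum_eq_zero
      intro b _
      simp [Matrix.kroneckerMap_apply, Matrix.one_apply, (Ne.symm hl')]
    · intro h; exact absurd (Finset.mem_univ _) h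
  rw [Fintype.sum_prod_type, Fintype.sum_prod_type]
  simp_rw [hmv]
  calc ∑ l : L, ∑ a, ‖A.mulVec (fun b => x (l, b)) a‖^2
      ≤ ∑ l : L, (opNorm A)^2 * ∑ b, ‖x (l, b)‖^2 :=
        Finset.sum_le_sum fun l _ => sq_of_opNorm_le A (opNorm A) le_rfl _
    _ = (opNorm A)^2 * ∑ l : L, ∑ b, ‖x (l, b)‖^2 := by rw [Finset.mul_sum]

lemma opNorm_kron_one_le {R : Type*} [Fintype R] [DecidableEq R]
    (A : Matrix I I ℂ) : opNorm (A ⊗ₖ (1 : Matrix R R ℂ)) ≤ opNorm A := by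
  apply opNorm_le_of_sq _ _ (opNorm_nonneg A)
  intro x
  have hmv : ∀ a r, (A ⊗ₖ (1 : Matrix R R ℂ)).mulVec x (a, r)
      = A.mulVec (fun b => x (b, r)) a := by
    intro a r
    rw [Matrix.mulVec, dotProduct, Fintype.sum_prod_type]
    rw [Matrix.mulVec, dotProduct]
    refine Finset.sum_congr rfl fun b _ => ?_
    rw [Finset.sum_eq_single r]
    · simp [Matrix.kroneckerMap_apply, Matrix.one_apply]
    · intro r' _ hr'
      simp [Matrix.kroneckerMap_apply, Matrix.one_apply, (Ne.symm hr')]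
    · intro h; exact absurd (Finset.mem_univ _) h
  rw [Fintype.sum_prod_type, Fintype.sum_prod_type]
  rw [Finset.sum_comm (f := fun a r => ‖(A ⊗ₖ (1 : Matrix R R ℂ)).mulVec x (a, r)‖^2),
    Finset.sum_comm (f := fun a r => ‖x (a, r)‖^2)]
  simp_rw [hmv]
  calc ∑ r : R, ∑ a, ‖A.mulVec (fun b => x (b, r)) a‖^2
      ≤ ∑ r : R, (opNorm A)^2 * ∑ b, ‖x (b, r)‖^2 :=
        Finset.sum_le_sum fun r _ => sq_of_opNorm_le A (opNorm A) le_rfl _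
    _ = (opNorm A)^2 * ∑ r : R, ∑ b, ‖x (b, r)‖^2 := by rw [Finset.mul_sum]


lemma core_orth (v w x : EuclideanSpace ℂ I) (hvw : ⟪v, w⟫ = (0:ℂ)) :
    ‖(⟪v,x⟫ : ℂ) • w - (⟪w,x⟫ : ℂ) • v‖ ≤ (‖v‖ * ‖w‖) * ‖x‖ := by
  by_cases hv : v = 0
  · simp [hv]
  by_cases hw : w = 0
  · simp [hw]
  have hvn : (0:ℝ) < ‖v‖ := norm_pos_iff.mpr hv
  have hwn : (0:ℝ) < ‖w‖ := norm_pos_iff.mpr hw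
  have hwv : ⟪w, v⟫ = (0:ℂ) := by rw [← inner_conj_symm, hvw, map_zero]
  set u : Bool → EuclideanSpace ℂ I :=
    fun b => if b then (‖v‖:ℂ)⁻¹ • v else (‖w‖:ℂ)⁻¹ • w with hu
  have hnu : ∀ (z : EuclideanSpace ℂ I), z ≠ 0 → ‖(‖z‖:ℂ)⁻¹ • z‖ = 1 := by
    intro z hz
    rw [norm_smul, norm_inv, Complex.norm_real, Real.norm_eq_abs,
      abs_of_nonneg (norm_nonneg z), inv_mul_cancel₀ (norm_ne_zero_iff.mpr hz)]
  have horth : Orthonormal ℂ u := by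
    constructor
    · intro i; match i with
      | true => exact hnu v hv
      | false => exact hnu w hw
    · intro i j hij
      match i, j with
      | true, true => exact absurd rfl hij
      | false, false => exact absurd rfl hij
      | true, false => simp [hu, inner_smul_left, inner_smul_right, hvw]
      | false, true => simp [hu, inner_smul_left, inner_smul_right, hwv]
  have bessel := horth.sum_inner_products_le (s := Finset.univ) x
  rw [Fintype.sum_bool] at bessel
  have hut : ‖⟪u true, x⟫‖ = ‖v‖⁻¹ * ‖⟪v, x⟫‖ := by
    simp [hu, inner_smul_left, norm_mul, Complex.conj_inv, Complex.conj_ofReal]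
    ring
  have huf : ‖⟪u false, x⟫‖ = ‖w‖⁻¹ * ‖⟪w, x⟫‖ := by
    simp [hu, inner_smul_left, norm_mul, Complex.conj_inv, Complex.conj_ofReal]
    ring
  rw [hut, huf] at bessel
  set B := ‖⟪v, x⟫‖ with hB
  set C := ‖⟪w, x⟫‖ with hC
  have hBn : 0 ≤ B := norm_nonneg _
  have hCn : 0 ≤ C := norm_nonneg _
  -- squared norm computation
  have hsq : ‖(⟪v,x⟫ : ℂ) • w - (⟪w,x⟫ : ℂ) • v‖^2 = B^2 * ‖w‖^2 + C^2 * ‖v‖^2 := by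
    rw [@norm_sub_sq ℂ]
    have hcross : ⟪(⟪v,x⟫ : ℂ) • w, (⟪w,x⟫ : ℂ) • v⟫ = 0 := by
      rw [inner_smul_left, inner_smul_right, hwv]; ring
    rw [hcross]
    simp [norm_smul, hB, hC]
    ring
  have key : B^2 * ‖w‖^2 + C^2 * ‖v‖^2 ≤ (‖v‖ * ‖w‖ * ‖x‖)^2 := by
    have h1 : B^2 * ‖w‖^2 + C^2 * ‖v‖^2
        = ((‖v‖⁻¹*B)^2 + (‖w‖⁻¹*C)^2) * (‖v‖^2*‖w‖^2) := by
      field_simp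
    rw [h1]
    calc ((‖v‖⁻¹*B)^2 + (‖w‖⁻¹*C)^2) * (‖v‖^2*‖w‖^2)
        ≤ ‖x‖^2 * (‖v‖^2*‖w‖^2) := mul_le_mul_of_nonneg_right bessel (by positivity)
      _ = (‖v‖ * ‖w‖ * ‖x‖)^2 := by ring
  have := hsq ▸ key
  calc ‖(⟪v,x⟫ : ℂ) • w - (⟪w,x⟫ : ℂ) • v‖
      = Real.sqrt (‖(⟪v,x⟫ : ℂ) • w - (⟪w,x⟫ : ℂ) • v‖^2) := (Real.sqrt_sq (norm_nonneg _)).symm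
    _ ≤ Real.sqrt ((‖v‖ * ‖w‖ * ‖x‖)^2) := Real.sqrt_le_sqrt this
    _ = ‖v‖ * ‖w‖ * ‖x‖ := Real.sqrt_sq (by positivity)


lemma core_real (v w x : EuclideanSpace ℂ I) (hr : conj ⟪v,w⟫ = ⟪v,w⟫) :
    ‖(⟪v,x⟫ : ℂ) • w - (⟪w,x⟫ : ℂ) • v‖ ≤ (‖v‖ * ‖w‖) * ‖x‖ := by
  by_cases hv : v = 0
  · simp [hv]
  have hvn : (0:ℝ) < ‖v‖ := norm_pos_iff.mpr hv
  set c : ℂ := ⟪v,w⟫ / ((‖v‖:ℂ)^2) with hc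
  have hnz : ((‖v‖:ℂ)^2) ≠ 0 :=
    pow_ne_zero 2 (Complex.ofReal_ne_zero.mpr (norm_ne_zero_iff.mpr hv))
  have hcreal : conj c = c := by
    rw [hc, map_div₀, hr]; congr 1
    rw [map_pow, Complex.conj_ofReal]
  set w' : EuclideanSpace ℂ I := w - c • v with hw'
  have hvw' : ⟪v, w'⟫ = 0 := by
    rw [hw', inner_sub_right, inner_smul_right, inner_self_eq_norm_sq_to_K, hc]
    field_simp
    simp [hv]
  have hw'v : ⟪w', v⟫ = 0 := by rw [← inner_conj_symm, hvw', map_zero]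
  have hkey : (⟪v,x⟫ : ℂ) • w - (⟪w,x⟫ : ℂ) • v = (⟪v,x⟫ : ℂ) • w' - (⟪w',x⟫ : ℂ) • v := by
    have hwx : ⟪w, x⟫ = ⟪w', x⟫ + c * ⟪v, x⟫ := by
      rw [hw', inner_sub_left, inner_smul_left, hcreal]; ring
    rw [hw', hwx, smul_sub]
    rw [smul_smul, add_smul, mul_comm, mul_smul]
    abel
  rw [hkey]
  have hle := core_orth v w' x hvw'
  have hw'le : ‖w'‖ ≤ ‖w‖ := by
    have hpyth : ‖w‖^2 = ‖w'‖^2 + ‖c • v‖^2 := by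
      have : w = w' + c • v := by rw [hw']; abel
      rw [this, @norm_add_sq ℂ]
      have : ⟪w', c • v⟫ = 0 := by rw [inner_smul_right, hw'v, mul_zero]
      rw [this]; simp
    have h2 : ‖w'‖^2 ≤ ‖w‖^2 := by rw [hpyth]; exact le_add_of_nonneg_right (by positivity)
    calc ‖w'‖ = Real.sqrt (‖w'‖^2) := (Real.sqrt_sq (norm_nonneg _)).symm
      _ ≤ Real.sqrt (‖w‖^2) := Real.sqrt_le_sqrt h2
      _ = ‖w‖ := Real.sqrt_sq (norm_nonneg _)
  calc ‖(⟪v,x⟫ : ℂ) • w' - (⟪w',x⟫ : ℂ) • v‖ ≤ (‖v‖ * ‖w'‖) * ‖x‖ := hle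
    _ ≤ (‖v‖ * ‖w‖) * ‖x‖ := by
        apply mul_le_mul_of_nonneg_right _ (norm_nonneg x)
        exact mul_le_mul_of_nonneg_left hw'le (le_of_lt hvn)


lemma opNorm_rank1_comm (v w : I → ℂ)
    (hr : conj (∑ i, conj (v i) * w i) = ∑ i, conj (v i) * w i) :
    opNorm (rank1 w v - rank1 v w) ≤
      Real.sqrt (∑ i, ‖v i‖^2) * Real.sqrt (∑ i, ‖w i‖^2) := by
  set v' : EuclideanSpace ℂ I := (WithLp.equiv 2 (I → ℂ)).symm v with hv'
  set w' : EuclideanSpace ℂ I := (WithLp.equiv 2 (I → ℂ)).symm w with hw'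
  have hnv : ‖v'‖ = Real.sqrt (∑ i, ‖v i‖^2) := by
    rw [EuclideanSpace.norm_eq]; rfl
  have hnw : ‖w'‖ = Real.sqrt (∑ i, ‖w i‖^2) := by
    rw [EuclideanSpace.norm_eq]; rfl
  rw [← hnv, ← hnw]
  refine ContinuousLinearMap.opNorm_le_bound _ (by positivity) (fun x => ?_)
  have happ : Matrix.toEuclideanCLM (𝕜 := ℂ) (rank1 w v - rank1 v w) x
      = (⟪v',x⟫ : ℂ) • w' - (⟪w',x⟫ : ℂ) • v' := by
    ext i
    show (rank1 w v - rank1 v w).mulVec (fun j => x j) i = _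
    have hL : (rank1 w v - rank1 v w).mulVec (fun j => x j) i
        = w i * (∑ j, conj (v j) * x j) - v i * (∑ j, conj (w j) * x j) := by
      simp only [Matrix.mulVec, Matrix.sub_apply, rank1, Matrix.of_apply, dotProduct,
        sub_mul, Finset.sum_sub_distrib, Finset.mul_sum]
      ring_nf
    rw [hL]
    have hiv : (⟪v',x⟫ : ℂ) = ∑ j, conj (v j) * x j := by
      rw [PiLp.inner_apply]; simp only [RCLike.inner_apply']; rfl
    have hiw : (⟪w',x⟫ : ℂ) = ∑ j, conj (w j) * x j := by
      rw [PiLp.inner_apply]; simp only [RCLike.inner_apply']; rfl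
    show _ = (⟪v',x⟫ : ℂ) * w i - (⟪w',x⟫ : ℂ) * v i
    rw [hiv, hiw]; ring
  rw [happ]
  apply core_real
  have : ⟪v', w'⟫ = ∑ i, conj (v i) * w i := by rw [PiLp.inner_apply]; simp only [RCLike.inner_apply']; rfl
  rw [this]; exact hr

end NormAux

lemma signDot_prod {n : ℕ} (η y : Yb n) :
    signDot η y = ∏ i, (if η i && y i then (-1:ℂ) else 1) := by
  rw [signDot, ← Finset.prod_const, Finset.prod_filter]

lemma signDot_comm {n : ℕ} (η y : Yb n) : signDot η y = signDot y η := by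
  simp only [signDot_prod, Bool.and_comm]

lemma signDot_orth {n : ℕ} (y y' : Yb n) :
    ∑ z : Yb n, signDot y z * signDot y' z = if y = y' then (2:ℂ)^n else 0 := by
  have h1 : ∀ z : Yb n, signDot y z * signDot y' z
      = ∏ i, ((if y i && z i then (-1:ℂ) else 1) * (if y' i && z i then (-1:ℂ) else 1)) := by
    intro z; rw [signDot_prod, signDot_prod, Finset.prod_mul_distrib]
  simp_rw [h1]
  rw [show (Finset.univ : Finset (Yb n)) = Fintype.piFinset fun _ => (Finset.univ : Finset Bool)
      from (Fintype.piFinset_univ).symm]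
  rw [← Finset.prod_univ_sum (t := fun _ : Fin n => (Finset.univ : Finset Bool))
    (f := fun i b => (if y i && b then (-1:ℂ) else 1) * (if y' i && b then (-1:ℂ) else 1))]
  have h2 : ∀ i : Fin n,
      (∑ b : Bool, (if y i && b then (-1:ℂ) else 1) * (if y' i && b then (-1:ℂ) else 1))
      = if y i = y' i then 2 else 0 := by
    intro i
    cases hy : y i <;> cases hy' : y' i <;> simp [Fintype.sum_bool] <;> norm_num
  simp_rw [h2]
  by_cases h : y = y'
  · subst h; simp
  · rw [if_neg h]
    obtain ⟨i, hi⟩ : ∃ i, y i ≠ y' i := by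
      by_contra hc; push_neg at hc; exact h (funext hc)
    exact Finset.prod_eq_zero (Finset.mem_univ i) (by rw [if_neg hi])

lemma cst_sq (n : ℕ) : (cst n : ℝ) * cst n * 2^n = 1 := by
  rw [cst, ← Real.rpow_add (by norm_num : (0:ℝ)<2), ← Real.rpow_natCast (2:ℝ) n,
    ← Real.rpow_add (by norm_num : (0:ℝ)<2)]
  norm_num

lemma cst_sq' (n : ℕ) : (cst n : ℂ) * cst n * 2^n = 1 := by
  have := cst_sq n
  have h2 : ((cst n : ℝ) * cst n * 2^n : ℂ) = 1 := by exact_mod_cast congrArg (Complex.ofReal) this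
  push_cast at h2
  exact_mod_cast h2

lemma signDot_zero_left {n : ℕ} (y : Yb n) : signDot (fun _ => false) y = 1 := by
  simp [signDot]

lemma signDot_zero_right {n : ℕ} (y : Yb n) : signDot y (fun _ => false) = 1 := by
  simp [signDot]

lemma signDot_conj {n : ℕ} (η y : Yb n) : (starRingEnd ℂ) (signDot η y) = signDot η y := by
  rw [signDot, map_pow, map_neg, map_one]

lemma Hbar_mul_self (n : ℕ) : Hbar n * Hbar n = 1 := by
  ext a b
  rw [Matrix.mul_apply, Fintype.sum_option]
  match a, b with
  | none, none => simp [Hbar, Matrix.one_apply]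
  | none, some y' => simp [Hbar, Matrix.one_apply]
  | some y, none => simp [Hbar, Matrix.one_apply]
  | some y, some y' =>
    simp only [Hbar, Matrix.of_apply]
    have h1 : ∑ z : Yb n, ((cst n : ℂ) * signDot y z) * ((cst n : ℂ) * signDot z y')
        = (cst n : ℂ) * cst n * ∑ z : Yb n, signDot y z * signDot y' z := by
      rw [Finset.mul_sum]
      refine Finset.sum_congr rfl fun z _ => ?_
      rw [signDot_comm z y']; ring
    rw [h1, signDot_orth]
    by_cases h : y = y'
    · subst h
      simp [Matrix.one_apply, cst_sq' n]
    · simp [Matrix.one_apply, h]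

lemma Hbar_conjTranspose (n : ℕ) : (Hbar n)ᴴ = Hbar n := by
  ext a b
  match a, b with
  | none, none => simp [Hbar, Matrix.conjTranspose_apply]
  | none, some y' => simp [Hbar, Matrix.conjTranspose_apply]
  | some y, none => simp [Hbar, Matrix.conjTranspose_apply]
  | some y, some y' =>
    simp only [Hbar, Matrix.conjTranspose_apply, Matrix.of_apply, Complex.star_def, map_mul,
      signDot_conj, Complex.conj_ofReal]
    rw [signDot_comm]

def uvec (n : ℕ) : Ybar n → ℂ := fun b => ket none b - ket (some (fun _ => false)) b
def vvec (n : ℕ) : Ybar n → ℂ := fun b => ket none b - phi0 n b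

lemma Sswap_eq (n : ℕ) : Sswap n = 1 - rank1 (uvec n) (uvec n) := by
  ext a b
  simp only [Sswap, Matrix.of_apply, Matrix.sub_apply, Matrix.one_apply, rank1, uvec, ket,
    swapBot, map_sub]
  match a, b with
  | none, none => simp
  | none, some y' =>
    by_cases h : y' = fun _ => false <;> simp [h] <;> norm_num
  | some y, none =>
    by_cases h : y = fun _ => false <;> simp [h] <;> norm_num
  | some y, some y' =>
    by_cases h : y' = fun _ => false
    · subst h
      by_cases h2 : y = fun _ => false <;> simp [h2] <;> norm_num
    · by_cases h2 : y = y' <;> by_cases h3 : y = fun _ => false <;>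
        simp [h, h2, h3] <;> norm_num

lemma mul_rank1 {I : Type*} [Fintype I] (A : Matrix I I ℂ) (u w : I → ℂ) :
    A * rank1 u w = rank1 (A.mulVec u) w := by
  ext a b
  simp only [Matrix.mul_apply, rank1, Matrix.of_apply, Matrix.mulVec, dotProduct,
    Finset.sum_mul]
  exact Finset.sum_congr rfl fun c _ => by ring

lemma rank1_mul {I : Type*} [Fintype I] (A : Matrix I I ℂ) (u w : I → ℂ) :
    rank1 u w * A = rank1 u (Aᴴ.mulVec w) := by
  ext a b
  simp only [Matrix.mul_apply, rank1, Matrix.of_apply, Matrix.mulVec, dotProduct,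
    map_sum, map_mul, Matrix.conjTranspose_apply, Finset.mul_sum, Complex.star_def,
    RingHomCompTriple.comp_apply, Complex.conj_conj, RingHom.id_apply]
  exact Finset.sum_congr rfl fun c _ => by ring

lemma rank1_conjTranspose {I : Type*} [Fintype I] (u w : I → ℂ) :
    (rank1 u w)ᴴ = rank1 w u := by
  ext a b
  simp [rank1, Matrix.conjTranspose_apply, Complex.star_def, mul_comm]

lemma swapBot_invol (n : ℕ) (a : Ybar n) : swapBot n (swapBot n a) = a := by
  match a with
  | none => simp [swapBot]
  | some y =>
    by_cases h : y = fun _ => false <;> simp [swapBot, h]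

lemma Sswap_mul_self (n : ℕ) : Sswap n * Sswap n = 1 := by
  ext a b
  simp only [Matrix.mul_apply, Sswap, Matrix.of_apply, Matrix.one_apply, ite_mul, one_mul,
    zero_mul]
  rw [Finset.sum_eq_single (swapBot n b)]
  · rw [swapBot_invol]
    by_cases h : a = b <;> simp [h]
  · intro c _ hc
    rw [if_neg hc]
    simp
  · intro h; exact absurd (Finset.mem_univ _) h

lemma Hbar_mulVec_uvec (n : ℕ) : (Hbar n).mulVec (uvec n) = vvec n := by
  funext b
  simp only [Matrix.mulVec, dotProduct, uvec, ket]
  rw [Fintype.sum_option]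
  have h1 : ∀ z : Yb n, ((if (none : Ybar n) = none then (1:ℂ) else 0) -
      if (none : Ybar n) = some (fun _ => false) then 1 else 0) = 1 := by intro z; simp
  match b with
  | none =>
    simp only [Hbar, Matrix.of_apply]
    simp [vvec, ket, phi0, phi]
  | some y =>
    simp only [Hbar, Matrix.of_apply]
    have h2 : ∑ z : Yb n, ((cst n : ℂ) * signDot y z) *
        ((if (some z : Ybar n) = none then (1:ℂ) else 0) -
          if (some z : Ybar n) = some (fun _ => false) then 1 else 0)
        = -((cst n : ℂ) * signDot y (fun _ => false)) := by
      calc ∑ z : Yb n, ((cst n : ℂ) * signDot y z) *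
          ((if (some z : Ybar n) = none then (1:ℂ) else 0) -
            if (some z : Ybar n) = some (fun _ => false) then 1 else 0)
          = ∑ z : Yb n, (if z = (fun _ => false) then -((cst n : ℂ) * signDot y z) else 0) := by
            refine Finset.sum_congr rfl fun z _ => ?_
            by_cases h : z = (fun _ : Fin n => false) <;> simp [h]
        _ = -((cst n : ℂ) * signDot y (fun _ => false)) := by
            rw [Finset.sum_ite_eq' Finset.univ _ _]
            simp
    rw [h2, signDot_zero_right]
    simp [vvec, ket, phi0, phi, signDot_zero_left]

lemma Fmat_eq (n : ℕ) : Fmat n = 1 - rank1 (vvec n) (vvec n) := by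
  rw [Fmat, Sswap_eq, Matrix.mul_sub, Matrix.mul_one, Matrix.sub_mul, Hbar_mul_self,
    mul_rank1, rank1_mul, Hbar_conjTranspose, Hbar_mulVec_uvec]

lemma Fmat_conjTranspose (n : ℕ) : (Fmat n)ᴴ = Fmat n := by
  rw [Fmat_eq, Matrix.conjTranspose_sub, Matrix.conjTranspose_one, rank1_conjTranspose]

lemma Fmat_mul_self (n : ℕ) : Fmat n * Fmat n = 1 := by
  rw [Fmat]
  calc Hbar n * Sswap n * Hbar n * (Hbar n * Sswap n * Hbar n)
      = Hbar n * (Sswap n * (Hbar n * Hbar n) * Sswap n) * Hbar n := by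
        simp only [Matrix.mul_assoc]
    _ = 1 := by rw [Hbar_mul_self, Matrix.mul_one, Sswap_mul_self, Matrix.mul_one,
          Hbar_mul_self]

end Stmt9Aux


-- ======== database-space lemmas ========
section DbAux
open scoped ComplexConjugate

def eDb (n : ℕ) (X : Type*) [DecidableEq X] (x : X) :
    Db n X ≃ (Ybar n × ({x' : X // x' ≠ x} → Ybar n)) where
  toFun d := (d x, fun x' => d x'.1)
  invFun p := fun x' => if h : x' = x then p.1 else p.2 ⟨x', h⟩
  left_inv d := by
    funext x'
    by_cases h : x' = x <;> simp [h]
  right_inv p := by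
    obtain ⟨a, r⟩ := p
    refine Prod.ext ?_ ?_
    · simp
    · funext x'
      simp [x'.2]

variable {n : ℕ} {X : Type*} [Fintype X] [DecidableEq X]

lemma onCoord_eq (x : X) (A : Matrix (Ybar n) (Ybar n) ℂ) :
    onCoord x A = ((A ⊗ₖ (1 : Matrix ({x' : X // x' ≠ x} → Ybar n)
      ({x' : X // x' ≠ x} → Ybar n) ℂ)).submatrix (eDb n X x) (eDb n X x)) := by
  ext d d'
  simp only [onCoord, Matrix.of_apply, Matrix.submatrix_apply, Matrix.kroneckerMap_apply,
    Matrix.one_apply, eDb, Equiv.coe_fn_mk]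
  have hcond : (∀ x', x' ≠ x → d x' = d' x') ↔
      ((fun x' : {x' : X // x' ≠ x} => d x'.1) = fun x' => d' x'.1) :=
    ⟨fun h => funext fun x' => h x'.1 x'.2, fun h x' hx' => congrFun h ⟨x', hx'⟩⟩
  by_cases h : ∀ x', x' ≠ x → d x' = d' x'
  · rw [if_pos h, if_pos (hcond.mp h), mul_one]
  · rw [if_neg h, if_neg (fun hc => h (hcond.mpr hc)), mul_zero]

lemma onCoord_mul (x : X) (A B : Matrix (Ybar n) (Ybar n) ℂ) :
    onCoord x A * onCoord x B = onCoord x (A*B) := by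
  rw [onCoord_eq, onCoord_eq, onCoord_eq, Matrix.submatrix_mul_equiv,
    ← Matrix.mul_kronecker_mul, Matrix.one_mul]

lemma onCoord_sub (x : X) (A B : Matrix (Ybar n) (Ybar n) ℂ) :
    onCoord x A - onCoord x B = onCoord x (A - B) := by
  ext d d'
  simp only [onCoord, Matrix.sub_apply, Matrix.of_apply]
  by_cases h : ∀ x', x' ≠ x → d x' = d' x'
  · rw [if_pos h, if_pos h, if_pos h]
  · rw [if_neg h, if_neg h, if_neg h, sub_zero]

lemma onCoord_one (x : X) : onCoord x (1 : Matrix (Ybar n) (Ybar n) ℂ) = (1 : Matrix (Db n X) (Db n X) ℂ) := by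
  rw [onCoord_eq, Matrix.one_kronecker_one, Matrix.submatrix_one_equiv]

lemma onCoord_conjTranspose (x : X) (A : Matrix (Ybar n) (Ybar n) ℂ) :
    (onCoord x A)ᴴ = onCoord x Aᴴ := by
  ext d d'
  simp only [Matrix.conjTranspose_apply, onCoord, Matrix.of_apply]
  have hcond : (∀ x', x' ≠ x → d' x' = d x') ↔ (∀ x', x' ≠ x → d x' = d' x') :=
    ⟨fun h x' hx' => (h x' hx').symm, fun h x' hx' => (h x' hx').symm⟩
  by_cases h : ∀ x', x' ≠ x → d x' = d' x'
  · rw [if_pos (hcond.mpr h), if_pos h]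
  · rw [if_neg (fun hc => h (hcond.mp hc)), if_neg h, star_zero]

lemma onCoord_diagonal (x : X) (g : Ybar n → ℂ) :
    onCoord x (Matrix.diagonal g) = Matrix.diagonal (fun d : Db n X => g (d x)) := by
  ext d d'
  simp only [onCoord, Matrix.of_apply, Matrix.diagonal_apply]
  by_cases h : d = d'
  · subst h; simp
  · by_cases h2 : ∀ x', x' ≠ x → d x' = d' x'
    · rw [if_pos h2, if_neg h]
      have hne : d x ≠ d' x := fun hc => h (funext fun x' => by
        by_cases hx : x' = x
        · rw [hx]; exact hc
        · exact h2 x' hx)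
      rw [if_neg hne]
    · rw [if_neg h2, if_neg h]

lemma onCoord_mul_diag_rest (x : X) (A : Matrix (Ybar n) (Ybar n) ℂ) (q : Db n X → ℂ)
    (hq : ∀ d d' : Db n X, (∀ x', x' ≠ x → d x' = d' x') → q d = q d') :
    onCoord x A * Matrix.diagonal q = Matrix.diagonal q * onCoord x A := by
  ext d d'
  rw [Matrix.mul_diagonal, Matrix.diagonal_mul]
  simp only [onCoord, Matrix.of_apply]
  by_cases h : ∀ x', x' ≠ x → d x' = d' x'
  · rw [if_pos h, hq d d' h]; ring
  · rw [if_neg h]; ring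

lemma xorY_xorY {n : ℕ} (y z : Yb n) : xorY (xorY y z) z = y := by
  funext i; simp [xorY]

lemma cnotDFun_invol (x : X) (p : Yb n × Db n X) : cnotDFun x (cnotDFun x p) = p := by
  obtain ⟨y, d⟩ := p
  simp only [cnotDFun]
  cases hd : d x with
  | none => simp [hd]
  | some yx => simp [hd, xorY_xorY]

lemma cnotDFun_snd (x : X) (p : Yb n × Db n X) : (cnotDFun x p).2 = p.2 := by
  obtain ⟨y, d⟩ := p
  simp only [cnotDFun]
  cases hd : d x <;> rfl

lemma CNOTD_mul_self (x : X) : (CNOTD x : Matrix (Yb n × Db n X) (Yb n × Db n X) ℂ) * CNOTD x = 1 := by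
  ext p q
  simp only [Matrix.mul_apply, CNOTD, Matrix.of_apply, Matrix.one_apply, ite_mul, one_mul,
    zero_mul]
  rw [Finset.sum_eq_single (cnotDFun x q)]
  · rw [cnotDFun_invol]
    by_cases h : p = q <;> simp [h]
  · intro c _ hc
    rw [if_neg hc]
    simp
  · intro h; exact absurd (Finset.mem_univ _) h

lemma CNOTD_conjTranspose (x : X) :
    (CNOTD x : Matrix (Yb n × Db n X) (Yb n × Db n X) ℂ)ᴴ = CNOTD x := by
  ext p q
  simp only [Matrix.conjTranspose_apply, CNOTD, Matrix.of_apply]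
  have hiff : (q = cnotDFun x p) ↔ (p = cnotDFun x q) :=
    ⟨fun h => by rw [h, cnotDFun_invol], fun h => by rw [h, cnotDFun_invol]⟩
  by_cases h : p = cnotDFun x q
  · rw [if_pos (hiff.mpr h), if_pos h, star_one]
  · rw [if_neg (fun hc => h (hiff.mp hc)), if_neg h, star_zero]

lemma CNOTD_mul_diag (x : X) (g : Db n X → ℂ) :
    (CNOTD x : Matrix (Yb n × Db n X) (Yb n × Db n X) ℂ) *
        Matrix.diagonal (fun p : Yb n × Db n X => g p.2)
      = Matrix.diagonal (fun p : Yb n × Db n X => g p.2) * CNOTD x := by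
  ext p q
  rw [Matrix.mul_diagonal, Matrix.diagonal_mul]
  simp only [CNOTD, Matrix.of_apply]
  by_cases h : p = cnotDFun x q
  · rw [if_pos h, h, cnotDFun_snd]; ring
  · rw [if_neg h]; ring

lemma one_kron_mul {Y D : Type*} [Fintype Y] [Fintype D] [DecidableEq Y] [DecidableEq D]
    (A B : Matrix D D ℂ) :
    ((1 : Matrix Y Y ℂ) ⊗ₖ A) * ((1 : Matrix Y Y ℂ) ⊗ₖ B) = (1 : Matrix Y Y ℂ) ⊗ₖ (A*B) := by
  rw [← Matrix.mul_kronecker_mul, Matrix.one_mul]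

lemma one_kron_sub {Y D : Type*} [Fintype Y] [Fintype D] [DecidableEq Y] (A B : Matrix D D ℂ) :
    ((1 : Matrix Y Y ℂ) ⊗ₖ A) - ((1 : Matrix Y Y ℂ) ⊗ₖ B) = (1 : Matrix Y Y ℂ) ⊗ₖ (A - B) := by
  ext p q
  simp [Matrix.kroneckerMap_apply, mul_sub]

lemma one_kron_conjT {Y D : Type*} [Fintype Y] [Fintype D] [DecidableEq Y] (A : Matrix D D ℂ) :
    ((1 : Matrix Y Y ℂ) ⊗ₖ A)ᴴ = (1 : Matrix Y Y ℂ) ⊗ₖ Aᴴ := by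
  ext p q
  simp only [Matrix.conjTranspose_apply, Matrix.kroneckerMap_apply, Matrix.one_apply]
  by_cases h : p.1 = q.1
  · rw [if_pos h.symm, if_pos h, one_mul, one_mul]
  · rw [if_neg (fun hc => h hc.symm), if_neg h, zero_mul, zero_mul, star_zero]

lemma one_kron_diag {Y D : Type*} [Fintype Y] [Fintype D] [DecidableEq Y] [DecidableEq D]
    (g : D → ℂ) :
    (1 : Matrix Y Y ℂ) ⊗ₖ Matrix.diagonal g = Matrix.diagonal (fun p : Y × D => g p.2) := by
  rw [show (1 : Matrix Y Y ℂ) = Matrix.diagonal (fun _ => 1) from Matrix.diagonal_one.symm,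
    Matrix.diagonal_kronecker_diagonal]
  simp only [one_mul]

end DbAux

-- ======== commutator algebra ========
section CommAux
variable {I : Type*} [Fintype I] [DecidableEq I]

lemma commM_mul_right (O A B : Matrix I I ℂ) (h : O * B = B * O) :
    commM O (A * B) = commM O A * B := by
  unfold commM
  calc O*(A*B) - A*B*O = (O*A)*B - A*(B*O) := by noncomm_ring
    _ = (O*A)*B - A*(O*B) := by rw [h]
    _ = (O*A - A*O)*B := by noncomm_ring

lemma commM_one_sub (O B : Matrix I I ℂ) : commM O (1 - B) = - commM O B := by
  unfold commM; noncomm_ring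

lemma commM_conj (U C P : Matrix I I ℂ) (hU : U * U = 1) :
    commM (U*C*U) P = U * commM C (U*P*U) * U := by
  unfold commM
  have h1 : U * (C * (U*P*U) - (U*P*U) * C) * U
      = U*C*U*P*(U*U) - (U*U)*(P*(U*C*U)) := by noncomm_ring
  rw [h1, hU]
  noncomm_ring

lemma commM_split (C Q P : Matrix I I ℂ) (hCP : C*P = P*C) :
    commM C Q = C*(Q - P) - (Q - P)*C := by
  unfold commM
  have h1 : C*(Q-P) - (Q-P)*C = (C*Q - Q*C) + (P*C - C*P) := by noncomm_ring
  rw [h1, hCP, sub_self, add_zero]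

lemma UPU_sub (U P : Matrix I I ℂ) (hU : U*U = 1) : U*P*U - P = -(U * commM U P) := by
  unfold commM
  have h1 : -(U * (U*P - P*U)) = U*P*U - (U*U)*P := by noncomm_ring
  rw [h1, hU, Matrix.one_mul]

lemma mul3_comm (U C Q : Matrix I I ℂ) (h1 : U*Q = Q*U) (h2 : C*Q = Q*C) :
    (U*C*U)*Q = Q*(U*C*U) := by
  calc (U*C*U)*Q = (U*C)*(U*Q) := by noncomm_ring
    _ = (U*C)*(Q*U) := by rw [h1]
    _ = U*(C*Q)*U := by noncomm_ring
    _ = U*(Q*C)*U := by rw [h2]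
    _ = (U*Q)*(C*U) := by noncomm_ring
    _ = (Q*U)*(C*U) := by rw [h1]
    _ = Q*(U*C*U) := by noncomm_ring

end CommAux


-- ======== small-space commutator bound ========
section SmallAux
open scoped ComplexConjugate
variable {n : ℕ} {X : Type*} [Fintype X] (R : X → Yb n → Prop) [∀ x, DecidablePred (R x)]
  (x : X)

def wfun : Ybar n → ℂ := fun a => (if hitB R x a then (1:ℂ) else 0) * vvec n a

lemma Pix_conjT : (Pix R x)ᴴ = Pix R x := by
  rw [Pix, Matrix.diagonal_conjTranspose]
  refine congrArg Matrix.diagonal ?_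
  funext a
  simp only [Pi.star_apply]
  by_cases h : hitB R x a <;> simp [h]

lemma Pix_mulVec : (Pix R x).mulVec (vvec n) = wfun R x := by
  funext a
  rw [Pix, Matrix.mulVec_diagonal, wfun]

lemma Tsm_eq : commM (Fmat n) (Pix R x) = rank1 (wfun R x) (vvec n) - rank1 (vvec n) (wfun R x) := by
  unfold commM
  rw [Fmat_eq]
  have h1 : (1 - rank1 (vvec n) (vvec n)) * Pix R x - Pix R x * (1 - rank1 (vvec n) (vvec n))
      = Pix R x * rank1 (vvec n) (vvec n) - rank1 (vvec n) (vvec n) * Pix R x := by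
    noncomm_ring
  rw [h1, mul_rank1, rank1_mul, Pix_conjT, Pix_mulVec]

lemma cst_nonneg (n : ℕ) : 0 ≤ cst n := Real.rpow_nonneg (by norm_num) _

lemma vvec_none : vvec n none = 1 := by simp [vvec, ket, phi0, phi]

lemma vvec_some (y : Yb n) : vvec n (some y) = -(cst n : ℂ) := by
  simp [vvec, ket, phi0, phi, signDot_zero_left]

lemma vvec_sq : ∑ a, ‖vvec n a‖^2 = 2 := by
  rw [Fintype.sum_option]
  have h1 : ‖vvec n none‖^2 = 1 := by rw [vvec_none]; simp
  have h2 : ∀ y : Yb n, ‖vvec n (some y)‖^2 = (cst n)^2 := by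
    intro y
    rw [vvec_some, norm_neg, Complex.norm_real, Real.norm_eq_abs, abs_of_nonneg (cst_nonneg n)]
  simp_rw [h1, h2]
  rw [Finset.sum_const, Finset.card_univ]
  have hcard : Fintype.card (Yb n) = 2^n := by simp
  rw [hcard, nsmul_eq_mul]
  push_cast
  have := cst_sq n
  nlinarith [cst_sq n]

lemma wfun_sq : ∑ a, ‖wfun R x a‖^2 = (Gam R x : ℝ) * (cst n)^2 := by
  rw [Fintype.sum_option]
  have h1 : ‖wfun R x none‖^2 = 0 := by
    have : hitB R x none = false := rfl
    simp [wfun, this]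
  have h2 : ∀ y : Yb n, ‖wfun R x (some y)‖^2 = if R x y then (cst n)^2 else 0 := by
    intro y
    have hh : hitB R x (some y) = decide (R x y) := rfl
    by_cases h : R x y
    · rw [if_pos h]
      have : wfun R x (some y) = -(cst n : ℂ) := by
        rw [wfun, hh, decide_eq_true h, if_pos rfl, one_mul, vvec_some]
      rw [this, norm_neg, Complex.norm_real, Real.norm_eq_abs, abs_of_nonneg (cst_nonneg n)]
    · rw [if_neg h]
      have : wfun R x (some y) = 0 := by
        rw [wfun, hh, decide_eq_false h]
        simp
      rw [this]
      simp
  simp_rw [h1, h2]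
  rw [zero_add, ← Finset.sum_filter, Finset.sum_const, nsmul_eq_mul]
  have hg : Gam R x = (Finset.univ.filter fun y => R x y).card := rfl
  rw [hg]

lemma wfun_real_inner :
    (starRingEnd ℂ) (∑ a, (starRingEnd ℂ) (vvec n a) * wfun R x a)
      = ∑ a, (starRingEnd ℂ) (vvec n a) * wfun R x a := by
  rw [map_sum]
  refine Finset.sum_congr rfl fun a _ => ?_
  have hc : (starRingEnd ℂ) ((if hitB R x a then (1:ℂ) else 0))
      = (if hitB R x a then (1:ℂ) else 0) := by
    split <;> simp
  rw [wfun, map_mul, map_mul, Complex.conj_conj, hc]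
  ring

lemma Tsm_norm : opNorm (commM (Fmat n) (Pix R x))
    ≤ Real.sqrt 2 * (Real.sqrt (Gam R x) * cst n) := by
  rw [Tsm_eq]
  refine le_trans (opNorm_rank1_comm (vvec n) (wfun R x) (wfun_real_inner R x)) ?_
  rw [vvec_sq, wfun_sq]
  rw [Real.sqrt_mul (by positivity) ((cst n)^2), Real.sqrt_sq (cst_nonneg n)]

end SmallAux

-- STATEMENT 9
set_option maxHeartbeats 1000000 in
theorem stmt9 (n : ℕ) {X : Type*} [Fintype X] [DecidableEq X] [Nonempty X]
    (R : X → Yb n → Prop) [∀ x, DecidablePred (R x)] (x : X) :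
    opNorm (commM (OxD n x) ((1 : Matrix (Yb n) (Yb n) ℂ) ⊗ₖ PiEmptyD R)) ≤
      2 * (2 : ℝ) ^ (-(n : ℝ) / 2) * Real.sqrt (2 * (Gam R x : ℝ)) := by
  classical
  set F' : Matrix (Db n X) (Db n X) ℂ := FDx n x with hF'
  set U : Matrix (Yb n × Db n X) (Yb n × Db n X) ℂ :=
    (1 : Matrix (Yb n) (Yb n) ℂ) ⊗ₖ F' with hU
  set C : Matrix (Yb n × Db n X) (Yb n × Db n X) ℂ := CNOTD x with hC
  set Px : Matrix (Db n X) (Db n X) ℂ := onCoord x (Pix R x) with hPx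
  set P : Matrix (Yb n × Db n X) (Yb n × Db n X) ℂ :=
    (1 : Matrix (Yb n) (Yb n) ℂ) ⊗ₖ Px with hP
  set qf : Db n X → ℂ :=
    (fun d => if ∀ x', x' ≠ x → hitB R x' (d x') = false then 1 else 0) with hqf
  set Q : Matrix (Db n X) (Db n X) ℂ := Matrix.diagonal qf with hQ
  have hFDx : FDx n x = onCoord x (Fmat n) := rfl
  have hPixd : Pix R x = Matrix.diagonal (fun a => if hitB R x a then (1:ℂ) else 0) := rfl
  have hOxD : OxD n x = U * C * U := rfl
  -- factorization of the empty-database projector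
  have hfact : PiEmptyD R = (1 - Px) * Q := by
    rw [hPx, hPixd, onCoord_diagonal, hQ, hqf, PiEmptyD,
      show (1 : Matrix (Db n X) (Db n X) ℂ) = Matrix.diagonal (fun _ => 1) from
        Matrix.diagonal_one.symm,
      Matrix.diagonal_sub, Matrix.diagonal_mul_diagonal]
    refine congrArg Matrix.diagonal ?_
    funext d
    by_cases hx : hitB R x (d x)
    · have hnall : ¬ ∀ x'', hitB R x'' (d x'') = false := fun hall => by
        rw [hall x] at hx; exact Bool.false_ne_true hx
      simp [hx, hnall]
    · by_cases hrest : ∀ x', x' ≠ x → hitB R x' (d x') = false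
      · have hall : ∀ x'', hitB R x'' (d x'') = false := fun x'' => by
          by_cases h : x'' = x
          · rw [h]; exact Bool.not_eq_true _ |>.mp hx
          · exact hrest x'' h
        simp [hx, hrest, hall]
      · have hnall : ¬ ∀ x'', hitB R x'' (d x'') = false := fun hall =>
          hrest (fun x' _ => hall x')
        simp [hx, hrest, hnall]
  -- O commutes with 1 ⊗ Q
  have hFQ : F' * Q = Q * F' := by
    rw [hF', hFDx, hQ]
    apply onCoord_mul_diag_rest
    intro d d' hdd'
    rw [hqf]
    simp only []
    have hiff : (∀ x', x' ≠ x → hitB R x' (d x') = false) ↔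
        (∀ x', x' ≠ x → hitB R x' (d' x') = false) := by
      constructor <;> intro h x' hx'
      · rw [← hdd' x' hx']; exact h x' hx'
      · rw [hdd' x' hx']; exact h x' hx'
    by_cases hcond : ∀ x', x' ≠ x → hitB R x' (d x') = false
    · rw [if_pos hcond, if_pos (hiff.mp hcond)]
    · rw [if_neg hcond, if_neg (fun hc => hcond (hiff.mpr hc))]
  have hUQ : U * ((1 : Matrix (Yb n) (Yb n) ℂ) ⊗ₖ Q)
      = ((1 : Matrix (Yb n) (Yb n) ℂ) ⊗ₖ Q) * U := by
    rw [hU, one_kron_mul, one_kron_mul, hFQ]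
  have hCQ : C * ((1 : Matrix (Yb n) (Yb n) ℂ) ⊗ₖ Q)
      = ((1 : Matrix (Yb n) (Yb n) ℂ) ⊗ₖ Q) * C := by
    rw [hQ, one_kron_diag, hC]
    exact CNOTD_mul_diag x qf
  have hOQ : (U*C*U) * ((1 : Matrix (Yb n) (Yb n) ℂ) ⊗ₖ Q)
      = ((1 : Matrix (Yb n) (Yb n) ℂ) ⊗ₖ Q) * (U*C*U) := mul3_comm _ _ _ hUQ hCQ
  -- split the commutator
  have hsplit : commM (OxD n x) ((1 : Matrix (Yb n) (Yb n) ℂ) ⊗ₖ PiEmptyD R)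
      = (-(commM (U*C*U) P)) * ((1 : Matrix (Yb n) (Yb n) ℂ) ⊗ₖ Q) := by
    rw [hOxD, hfact, ← one_kron_mul, commM_mul_right _ _ _ hOQ]
    congr 1
    rw [← one_kron_sub, Matrix.one_kronecker_one, commM_one_sub, hP]
  -- unitarity facts
  have hFF : F' * F' = 1 := by
    rw [hF', hFDx, onCoord_mul, Fmat_mul_self, onCoord_one]
  have hUU : U * U = 1 := by
    rw [hU, one_kron_mul, hFF, Matrix.one_kronecker_one]
  have hUH : Uᴴ = U := by
    rw [hU, one_kron_conjT, hF', hFDx, onCoord_conjTranspose, Fmat_conjTranspose]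
  have hUn : opNorm U ≤ 1 := opNorm_le_one_of_unitary U (by rw [hUH, hUU])
  have hCn : opNorm C ≤ 1 := opNorm_le_one_of_unitary C (by
    rw [hC, CNOTD_conjTranspose, CNOTD_mul_self])
  have hQn : opNorm ((1 : Matrix (Yb n) (Yb n) ℂ) ⊗ₖ Q) ≤ 1 := by
    rw [hQ, one_kron_diag]
    apply opNorm_diagonal_le_one
    intro p
    rw [hqf]
    simp only []
    split <;> simp
  -- C commutes with P
  have hCP : C * P = P * C := by
    rw [hP, hPx, hPixd, onCoord_diagonal, one_kron_diag, hC]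
    exact CNOTD_mul_diag x (fun d => if hitB R x (d x) then (1:ℂ) else 0)
  -- the inner commutator is a lift of the small one
  set T : Matrix (Ybar n) (Ybar n) ℂ := commM (Fmat n) (Pix R x) with hT
  have hUPU : commM U P = (1 : Matrix (Yb n) (Yb n) ℂ) ⊗ₖ (onCoord x T) := by
    unfold commM
    rw [hU, hP, one_kron_mul, one_kron_mul, one_kron_sub, hF', hFDx, hPx,
      onCoord_mul, onCoord_mul, onCoord_sub]
    rfl
  have hTn : opNorm T ≤ Real.sqrt 2 * (Real.sqrt (Gam R x) * cst n) := Tsm_norm R x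
  have h1 : opNorm (commM U P) ≤ opNorm T := by
    rw [hUPU]
    refine le_trans (opNorm_one_kron_le _) ?_
    rw [onCoord_eq]
    exact le_trans (opNorm_submatrix_le _ _) (opNorm_kron_one_le _)
  have hUPUP : opNorm (U*P*U - P) ≤ opNorm T := by
    rw [UPU_sub U P hUU, opNorm_neg]
    calc opNorm (U * commM U P) ≤ opNorm U * opNorm (commM U P) := opNorm_mul_le _ _
      _ ≤ 1 * opNorm T := mul_le_mul hUn h1 (opNorm_nonneg _) zero_le_one
      _ = opNorm T := one_mul _
  have h2 : opNorm (commM C (U*P*U)) ≤ 2 * opNorm T := by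
    rw [commM_split C (U*P*U) P hCP]
    calc opNorm (C*(U*P*U - P) - (U*P*U - P)*C)
        ≤ opNorm (C*(U*P*U - P)) + opNorm ((U*P*U - P)*C) := opNorm_sub_le _ _
      _ ≤ opNorm C * opNorm (U*P*U-P) + opNorm (U*P*U-P) * opNorm C :=
          add_le_add (opNorm_mul_le _ _) (opNorm_mul_le _ _)
      _ ≤ 1 * opNorm T + opNorm T * 1 :=
          add_le_add (mul_le_mul hCn hUPUP (opNorm_nonneg _) zero_le_one)
            (mul_le_mul hUPUP hCn (opNorm_nonneg _) (opNorm_nonneg _))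
      _ = 2 * opNorm T := by ring
  have h3 : opNorm (commM (U*C*U) P) ≤ 2 * opNorm T := by
    rw [commM_conj U C P hUU]
    calc opNorm (U * commM C (U*P*U) * U)
        ≤ opNorm (U * commM C (U*P*U)) * opNorm U := opNorm_mul_le _ _
      _ ≤ (opNorm U * opNorm (commM C (U*P*U))) * opNorm U :=
          mul_le_mul_of_nonneg_right (opNorm_mul_le _ _) (opNorm_nonneg _)
      _ ≤ (1 * (2*opNorm T)) * 1 := by
          apply mul_le_mul (mul_le_mul hUn h2 (opNorm_nonneg _) zero_le_one) hUn
            (opNorm_nonneg _) (by nlinarith [opNorm_nonneg T])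
      _ = 2 * opNorm T := by ring
  have hfinal : opNorm (commM (OxD n x) ((1 : Matrix (Yb n) (Yb n) ℂ) ⊗ₖ PiEmptyD R))
      ≤ 2 * opNorm T := by
    rw [hsplit]
    calc opNorm (-(commM (U*C*U) P) * ((1 : Matrix (Yb n) (Yb n) ℂ) ⊗ₖ Q))
        ≤ opNorm (-(commM (U*C*U) P)) * opNorm ((1 : Matrix (Yb n) (Yb n) ℂ) ⊗ₖ Q) :=
          opNorm_mul_le _ _
      _ ≤ (2*opNorm T) * 1 := mul_le_mul (by rw [opNorm_neg]; exact h3) hQn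
          (opNorm_nonneg _) (by nlinarith [opNorm_nonneg T])
      _ = 2*opNorm T := mul_one _
  refine le_trans hfinal ?_
  have hGnn : (0:ℝ) ≤ (Gam R x : ℝ) := Nat.cast_nonneg _
  calc 2 * opNorm T ≤ 2 * (Real.sqrt 2 * (Real.sqrt (Gam R x) * cst n)) := by linarith [hTn]
    _ = 2 * cst n * Real.sqrt (2 * (Gam R x : ℝ)) := by
        rw [Real.sqrt_mul (by norm_num : (0:ℝ) ≤ 2) ((Gam R x : ℝ))]
        ring
    _ = 2 * (2 : ℝ) ^ (-(n : ℝ) / 2) * Real.sqrt (2 * (Gam R x : ℝ)) := by rw [cst]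

end
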